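/- Let S be a k-monoid with alphabets X₁,…,X_k. If for all i ≠ j, every a ∈ Xᵢ and b ∈ Xⱼ commute (ab = ba), then S is isomorphic to the direct product S₁ × … × S_k of its coordinate free submonoids, where Sₗ = {a ∈ S : δ(a)ᵢ = 0 for i ≠ l}. -/

import Mathlib

/-- δ : S → ℕᵏ makes S a k-monoid: δ is a monoid homomorphism with the
unique factorization property. -/
def KUFP {S : Type*} [Monoid S] {k : ℕ} (δ : S → Fin k → ℕ) : Prop :=
  δ 1 = 0 ∧ (∀ x y : S, δ (x * y) = δ x + δ y) ∧
  ∀ (x : S) (m n : Fin k → ℕ), δ x = m + n →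
    ∃! p : S × S, x = p.1 * p.2 ∧ δ p.1 = m ∧ δ p.2 = n
/-- The submonoid Sₗ of elements whose size is supported on coordinate l only. -/
def CoordSubmonoid {S : Type*} [Monoid S] {k : ℕ} (δ : S → Fin k → ℕ)
    (h : KUFP δ) (l : Fin k) : Submonoid S where
  carrier := {a : S | ∀ i : Fin k, i ≠ l → δ a i = 0}
  one_mem' := by intro i _; simp [h.1]
  mul_mem' := by
    intro a b ha hb i hi
    have := h.2.1 a b
    simp [this, ha i hi, hb i hi]

section Aux

variable {S : Type*} [Monoid S] {k : ℕ} {δ : S → Fin k → ℕ}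

lemma kufp_eq_one_of_delta_zero (h : KUFP δ) {x : S} (hx : δ x = 0) : x = 1 := by
  obtain ⟨p, _, hu⟩ := h.2.2 x 0 0 (by simp [hx])
  have h1 := hu (1, x) ⟨by simp, h.1, hx⟩
  have h2 := hu (x, 1) ⟨by simp, hx, h.1⟩
  have := congrArg Prod.fst (h2.trans h1.symm)
  simpa using this

lemma kufp_single_of_supported {a : S} {i : Fin k}
    (ha : ∀ i', i' ≠ i → δ a i' = 0) : δ a = Pi.single i (δ a i) := by
  funext j
  rcases eq_or_ne j i with rfl | hj
  · simp
  · simp [Pi.single_eq_of_ne hj, ha j hj]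

lemma kufp_decompose (h : KUFP δ) {a : S} {m n : Fin k → ℕ} (hm : δ a = m + n) :
    ∃ p q : S, a = p * q ∧ δ p = m ∧ δ q = n := by
  obtain ⟨p, ⟨h1, h2, h3⟩, _⟩ := h.2.2 a m n hm
  exact ⟨p.1, p.2, h1, h2, h3⟩

/-- generators commute with supported elements -/
lemma kufp_commute_gen (h : KUFP δ)
    (hc : ∀ (i j : Fin k), i ≠ j → ∀ a b : S,
      δ a = Pi.single i 1 → δ b = Pi.single j 1 → a * b = b * a)
    {i j : Fin k} (hij : i ≠ j) :
    ∀ (m : ℕ) (g b : S), δ g = Pi.single i 1 →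
      (∀ j', j' ≠ j → δ b j' = 0) → δ b j = m → g * b = b * g := by
  intro m
  induction m with
  | zero =>
    intro g b hg hb hm
    have hb0 : δ b = 0 := by
      rw [kufp_single_of_supported hb, hm]; simp
    rw [kufp_eq_one_of_delta_zero h hb0, one_mul, mul_one]
  | succ m ih =>
    intro g b hg hb hm
    have hdec : δ b = Pi.single j m + Pi.single j 1 := by
      rw [kufp_single_of_supported hb, hm, ← Pi.single_add]
    obtain ⟨p, q, rfl, hp, hq⟩ := kufp_decompose h hdec
    have hpsup : ∀ j', j' ≠ j → δ p j' = 0 := by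
      intro j' hj'; simp [hp, Pi.single_eq_of_ne hj']
    have h1 : g * p = p * g := ih g p hg hpsup (by simp [hp])
    have h2 : g * q = q * g := hc i j hij g q hg hq
    rw [← mul_assoc, h1, mul_assoc, h2, ← mul_assoc]

/-- elements supported on different coordinates commute -/
lemma kufp_commute (h : KUFP δ)
    (hc : ∀ (i j : Fin k), i ≠ j → ∀ a b : S,
      δ a = Pi.single i 1 → δ b = Pi.single j 1 → a * b = b * a)
    {i j : Fin k} (hij : i ≠ j) (a b : S)
    (ha : ∀ i', i' ≠ i → δ a i' = 0) (hb : ∀ j', j' ≠ j → δ b j' = 0) :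
    a * b = b * a := by
  suffices H : ∀ (m : ℕ) (a : S), (∀ i', i' ≠ i → δ a i' = 0) → δ a i = m →
      a * b = b * a from H (δ a i) a ha rfl
  intro m
  induction m with
  | zero =>
    intro a ha hm
    have ha0 : δ a = 0 := by
      rw [kufp_single_of_supported ha, hm]; simp
    rw [kufp_eq_one_of_delta_zero h ha0, one_mul, mul_one]
  | succ m ih =>
    intro a ha hm
    have hdec : δ a = Pi.single i m + Pi.single i 1 := by
      rw [kufp_single_of_supported ha, hm, ← Pi.single_add]
    obtain ⟨p, q, rfl, hp, hq⟩ := kufp_decompose h hdec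
    have hpsup : ∀ i', i' ≠ i → δ p i' = 0 := by
      intro i' hi'; simp [hp, Pi.single_eq_of_ne hi']
    have h1 : p * b = b * p := ih p hpsup (by simp [hp])
    have h2 : q * b = b * q := kufp_commute_gen h hc hij (δ b j) q b hq hb rfl
    rw [mul_assoc, h2, ← mul_assoc, h1, mul_assoc]

lemma kufp_delta_list_prod (h : KUFP δ) :
    ∀ xs : List S, δ xs.prod = (xs.map δ).sum
  | [] => by simp [h.1]
  | a :: t => by simp [h.2.1, kufp_delta_list_prod h t]

lemma kufp_forall₂_iff (xs : List S) (L : List (Fin k → ℕ)) :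
    List.Forall₂ (fun a m => δ a = m) xs L ↔ xs.map δ = L := by
  rw [← List.forall₂_eq_eq_eq, List.forall₂_map_left_iff]

lemma kufp_list_fact (h : KUFP δ) :
    ∀ (L : List (Fin k → ℕ)) (x : S), δ x = L.sum →
      ∃! xs : List S, x = xs.prod ∧ List.Forall₂ (fun a m => δ a = m) xs L := by
  intro L
  induction L with
  | nil =>
    intro x hx
    refine ⟨[], ⟨by simpa using kufp_eq_one_of_delta_zero h (by simpa using hx),
      List.Forall₂.nil⟩, ?_⟩
    rintro xs ⟨-, hf⟩
    exact List.forall₂_nil_right_iff.mp hf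
  | cons m L ih =>
    intro x hx
    obtain ⟨p, ⟨hpe, hp1, hp2⟩, hpu⟩ := h.2.2 x m L.sum (by simpa using hx)
    obtain ⟨qs, ⟨hqe, hqf⟩, hqu⟩ := ih p.2 hp2
    refine ⟨p.1 :: qs, ⟨by simp [hpe, hqe], List.Forall₂.cons hp1 hqf⟩, ?_⟩
    rintro xs ⟨hxe, hxf⟩
    cases hxf with
    | cons ham htf =>
      rename_i a t
      have hδt : δ t.prod = L.sum := by
        rw [kufp_delta_list_prod h, (kufp_forall₂_iff t L).mp htf]
      have hat := hpu (a, t.prod) ⟨by simpa using hxe, ham, hδt⟩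
      have ha1 : a = p.1 := congrArg Prod.fst hat
      have ht2 : t.prod = p.2 := congrArg Prod.snd hat
      have := hqu t ⟨ht2.symm, htf⟩
      rw [ha1, this]

lemma ofFn_prod_mul {T : Type*} [Monoid T] :
    ∀ (n : ℕ) (f g : Fin n → T), (∀ i j, i ≠ j → Commute (f i) (g j)) →
      (List.ofFn (fun i => f i * g i)).prod
        = (List.ofFn f).prod * (List.ofFn g).prod := by
  intro n
  induction n with
  | zero => simp
  | succ n ih =>
    intro f g hcom
    rw [List.ofFn_succ, List.ofFn_succ, List.ofFn_succ, List.prod_cons,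
      List.prod_cons, List.prod_cons]
    have ihr := ih (fun i => f i.succ) (fun i => g i.succ)
      (fun i j hij => hcom i.succ j.succ (by simpa using hij))
    simp only [ihr]
    have hc0 : Commute (g 0) (List.ofFn fun i : Fin n => f i.succ).prod := by
      apply Commute.list_prod_right
      intro x hx
      obtain ⟨i, rfl⟩ := List.mem_ofFn.mp hx
      exact (hcom i.succ 0 (Fin.succ_ne_zero i)).symm
    calc f 0 * g 0 * ((List.ofFn fun i : Fin n => f i.succ).prod *
          (List.ofFn fun i : Fin n => g i.succ).prod)
        = f 0 * ((g 0 * (List.ofFn fun i : Fin n => f i.succ).prod) *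
          (List.ofFn fun i : Fin n => g i.succ).prod) := by
          simp only [mul_assoc]
      _ = f 0 * (((List.ofFn fun i : Fin n => f i.succ).prod * g 0) *
          (List.ofFn fun i : Fin n => g i.succ).prod) := by rw [hc0.eq]
      _ = f 0 * (List.ofFn fun i : Fin n => f i.succ).prod *
          (g 0 * (List.ofFn fun i : Fin n => g i.succ).prod) := by
          simp only [mul_assoc]

end Aux

theorem kmonoid_commuting_alphabets_direct_product {S : Type*} [Monoid S] {k : ℕ}
    (δ : S → Fin k → ℕ) (h : KUFP δ)
    (hc : ∀ (i j : Fin k), i ≠ j → ∀ a b : S,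
      δ a = Pi.single i 1 → δ b = Pi.single j 1 → a * b = b * a) :
    Nonempty (S ≃* ∀ l : Fin k, CoordSubmonoid δ h l) := by
  classical
  -- the map from the product to S
  let Ψ : (∀ l : Fin k, CoordSubmonoid δ h l) →* S :=
    { toFun := fun y => (List.ofFn fun l => ((y l : S))).prod
      map_one' := by simp
      map_mul' := by
        intro y z
        show (List.ofFn fun l => ((y l : S) * (z l : S))).prod = _
        exact ofFn_prod_mul k (fun l => (y l : S)) (fun l => (z l : S))
          (fun i j hij => kufp_commute h hc hij _ _ (y i).2 (z j).2)  }
  -- the canonical list of prescribed sizes for an element x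
  have key : ∀ x : S, δ x = (List.ofFn fun l : Fin k => Pi.single l (δ x l)).sum := by
    intro x
    rw [List.sum_ofFn]
    exact (Finset.univ_sum_single (δ x)).symm
  have hinj : Function.Injective Ψ := by
    intro y z hyz
    set x := Ψ y with hx
    have hfact : ∀ w : ∀ l : Fin k, CoordSubmonoid δ h l, Ψ w = x →
        (x = (List.ofFn fun l => ((w l : S))).prod ∧
          List.Forall₂ (fun a m => δ a = m) (List.ofFn fun l => ((w l : S)))
            (List.ofFn fun l : Fin k => Pi.single l (δ x l))) := by
      intro w hw
      refine ⟨hw.symm, ?_⟩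
      rw [kufp_forall₂_iff, List.map_ofFn]
      have hdx : δ x = fun l => δ (w l : S) l := by
        rw [← hw]
        show δ (List.ofFn fun l => ((w l : S))).prod = _
        rw [kufp_delta_list_prod h, List.map_ofFn, List.sum_ofFn]
        funext l'
        rw [Finset.sum_apply]
        rw [Finset.sum_eq_single l']
        · rfl
        · intro i _ hi
          exact (w i).2 l' (Ne.symm hi)
        · intro habs; exact absurd (Finset.mem_univ l') habs
      congr 1
      funext l
      show δ (w l : S) = Pi.single l (δ x l)
      rw [kufp_single_of_supported (w l).2, hdx]
    obtain ⟨xs, _, hu⟩ := kufp_list_fact h (List.ofFn fun l : Fin k => Pi.single l (δ x l)) x (key x)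
    have h1 := hu _ (hfact y rfl)
    have h2 := hu _ (hfact z hyz.symm)
    have heq := h1.trans h2.symm
    have hfg := List.ofFn_injective heq
    funext l
    exact Subtype.ext (congrFun hfg l)
  have hsurj : Function.Surjective Ψ := by
    intro x
    obtain ⟨xs, ⟨hxe, hxf⟩, -⟩ :=
      kufp_list_fact h (List.ofFn fun l : Fin k => Pi.single l (δ x l)) x (key x)
    have hmap : xs.map δ = List.ofFn fun l : Fin k => Pi.single l (δ x l) :=
      (kufp_forall₂_iff _ _).mp hxf
    have hlen : xs.length = k := by
      have := congrArg List.length hmap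
      simpa using this
    have hget : ∀ l : Fin k, δ (xs.get (Fin.cast hlen.symm l)) = Pi.single l (δ x l) := by
      intro l
      have h1 : (xs.map δ).get (Fin.cast (by simp [hlen]) l)
          = δ (xs.get (Fin.cast hlen.symm l)) := by
        simp
      rw [← h1, List.get_of_eq hmap, List.get_ofFn]
      exact congrArg (fun t : Fin k => Pi.single t (δ x t)) (Fin.ext rfl)
    refine ⟨fun l => ⟨xs.get (Fin.cast hlen.symm l), ?_⟩, ?_⟩
    · intro i hi
      rw [hget l, Pi.single_eq_of_ne hi]
    · show (List.ofFn fun l : Fin k => xs.get (Fin.cast hlen.symm l)).prod = x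
      rw [hxe]
      congr 1
      apply List.ext_get
      · simp [hlen]
      · intro n h1 h2
        simp [List.get_ofFn]
  exact ⟨(MulEquiv.ofBijective Ψ ⟨hinj, hsurj⟩).symm⟩
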